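/- Let 𝒜 = {A^ν : ν ∈ I} be a nonempty family of infinite real matrices. Then every bounded convergent real sequence x satisfies lim_n A^ν_n x = lim x uniformly in ν, and each A^ν maps bounded convergent sequences into bounded sequences, if and only if: (M1) sup_n ∑_k |a^ν_{n,k}| < ∞ for each ν; (M2) sup_ν sup_{n ≥ N} ∑_k |a^ν_{n,k}| < ∞ for some N; (M3) lim_n ∑_k a^ν_{n,k} = 1 uniformly in ν; (M4) lim_n a^ν_{n,k} = 0 uniformly in ν, for each fixed k. -/

import Mathlib

open Filter

/-- The series `∑ k, a k` converges (partial sums) to `l`. -/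
def SeriesConv (a : ℕ → ℝ) (l : ℝ) : Prop :=
  Tendsto (fun m => ∑ k ∈ Finset.range m, a k) atTop (nhds l)

section Helpers
open Finset

lemma blocks (c : ℕ → ℝ) (hdiv : Tendsto (fun m => ∑ k ∈ range m, |c k|) atTop atTop) :
    ∃ φ : ℕ → ℕ, φ 0 = 0 ∧ ∀ j, φ j < φ (j + 1) ∧
      ((j : ℝ) + 1) ≤ ∑ k ∈ Finset.Ico (φ j) (φ (j + 1)), |c k| := by
  have key : ∀ K : ℕ, ∀ b : ℝ, ∃ K', K < K' ∧ b ≤ ∑ k ∈ Finset.Ico K K', |c k| := by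
    intro K b
    obtain ⟨M, hM⟩ := (tendsto_atTop.mp hdiv (∑ k ∈ range K, |c k| + b)).exists_forall_of_atTop
    refine ⟨max M (K + 1), lt_of_lt_of_le (Nat.lt_succ_self K) (le_max_right _ _), ?_⟩
    have h1 : K ≤ max M (K + 1) := le_trans (Nat.le_succ K) (le_max_right _ _)
    have := hM (max M (K + 1)) (le_max_left _ _)
    rw [← Finset.sum_range_add_sum_Ico _ h1] at this
    linarith
  choose g hg1 hg2 using key
  exact ⟨fun j => Nat.rec 0 (fun j K => g K ((j : ℝ) + 1)) j, rfl, fun j => ⟨hg1 _ _, hg2 _ _⟩⟩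

lemma abs_summable_of_seriesConv (c : ℕ → ℝ)
    (H : ∀ x : ℕ → ℝ, Tendsto x atTop (nhds 0) → ∃ s, SeriesConv (fun k => c k * x k) s) :
    Summable (fun k => |c k|) := by
  by_contra hns
  have hdiv : Tendsto (fun m => ∑ k ∈ range m, |c k|) atTop atTop :=
    (not_summable_iff_tendsto_nat_atTop_of_nonneg (fun k => abs_nonneg _)).mp hns
  obtain ⟨φ, hφ0, hφ⟩ := blocks c hdiv
  have hmono : StrictMono φ := strictMono_nat_of_lt_succ fun j => (hφ j).1
  -- block index of k
  set J : ℕ → ℕ := fun k => Nat.findGreatest (fun j => φ j ≤ k) k with hJ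
  have hJ_le : ∀ k, φ (J k) ≤ k := by
    intro k
    exact Nat.findGreatest_spec (P := fun j => φ j ≤ k) (m := 0) (Nat.zero_le k)
      (by show φ 0 ≤ k; rw [hφ0]; exact Nat.zero_le k)
  have hJ_ge : ∀ j k, φ j ≤ k → j ≤ J k := by
    intro j k hjk
    exact Nat.le_findGreatest (le_trans (Nat.le_of_lt_succ (Nat.lt_succ_of_le (hmono.le_apply))) hjk) hjk
  have hJ_lt : ∀ k, k < φ (J k + 1) := by
    intro k
    by_contra h
    push_neg at h
    have := hJ_ge (J k + 1) k h
    omega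
  -- the sequence x
  set s : ℕ → ℝ := fun k => if 0 ≤ c k then 1 else -1 with hs
  have hcs : ∀ k, c k * s k = |c k| := by
    intro k
    by_cases h : 0 ≤ c k
    · simp [hs, h, abs_of_nonneg h]
    · push_neg at h
      simp [hs, not_le.mpr h, abs_of_neg h]
  set x : ℕ → ℝ := fun k => s k / (J k + 1) with hx
  have hx_tendsto : Tendsto x atTop (nhds 0) := by
    have hJtop : Tendsto J atTop atTop := by
      refine tendsto_atTop.mpr fun j => ?_
      filter_upwards [eventually_ge_atTop (φ j)] with k hk
      exact hJ_ge j k hk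
    have h0 : Tendsto (fun n : ℕ => ((n : ℝ) + 1)⁻¹) atTop (nhds 0) :=
      tendsto_inv_atTop_zero.comp (tendsto_atTop_add_const_right _ 1 tendsto_natCast_atTop_atTop)
    have h1 : Tendsto (fun k => ((J k : ℝ) + 1)⁻¹) atTop (nhds 0) := h0.comp hJtop
    refine squeeze_zero_norm (fun k => ?_) h1
    have hspos : |s k| = 1 := by
      by_cases h : 0 ≤ c k <;> simp [hs, h]
    have : |x k| = ((J k : ℝ) + 1)⁻¹ := by
      rw [hx]
      simp only [abs_div, hspos, abs_of_pos (by positivity : (0:ℝ) < (J k : ℝ) + 1)]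
      rw [one_div]
    rw [Real.norm_eq_abs, this]
  obtain ⟨l, hl⟩ := H x hx_tendsto
  -- partial sums diverge along φ
  have hJeq : ∀ m k, k ∈ Finset.Ico (φ m) (φ (m + 1)) → J k = m := by
    intro m k hk
    rw [Finset.mem_Ico] at hk
    have h1 : m ≤ J k := hJ_ge m k hk.1
    have h2 : J k ≤ m := by
      by_contra h
      push_neg at h
      exact absurd (le_trans (hmono.monotone h) (hJ_le k)) (not_le.mpr hk.2)
    omega
  have hterm : ∀ k, c k * x k = |c k| / ((J k : ℝ) + 1) := by
    intro k
    show c k * (s k / ((J k : ℝ) + 1)) = _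
    rw [← mul_div_assoc, hcs]
  have hQ : ∀ m : ℕ, (m : ℝ) ≤ ∑ k ∈ range (φ m), c k * x k := by
    intro m
    induction m with
    | zero => simp [hφ0]
    | succ m ih =>
      rw [← Finset.sum_range_add_sum_Ico _ (hmono.monotone (Nat.le_succ m))]
      have hblock : ∑ k ∈ Finset.Ico (φ m) (φ (m + 1)), c k * x k
          = (∑ k ∈ Finset.Ico (φ m) (φ (m + 1)), |c k|) / ((m : ℝ) + 1) := by
        rw [Finset.sum_div]
        refine Finset.sum_congr rfl fun k hk => ?_
        rw [hterm, hJeq m k hk]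
      have h1 : (1 : ℝ) ≤ ∑ k ∈ Finset.Ico (φ m) (φ (m + 1)), c k * x k := by
        rw [hblock]
        rw [le_div_iff₀ (by positivity)]
        simpa using (hφ m).2
      push_cast
      linarith
  have hP : ∀ m, ∑ k ∈ range (φ (m + 1)), c k * x k ≥ (m : ℝ) + 1 := by
    intro m
    have := hQ (m + 1)
    push_cast at this
    linarith
  have h1 : Tendsto (fun m => ∑ k ∈ range (φ (m + 1)), c k * x k) atTop (nhds l) :=
    hl.comp ((hmono.comp (strictMono_id.add_const 1)).tendsto_atTop)
  have h2 : Tendsto (fun m => ∑ k ∈ range (φ (m + 1)), c k * x k) atTop atTop :=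
    tendsto_atTop_mono (fun m => hP m) (tendsto_atTop_mono (fun m => by push_cast; linarith)
      tendsto_natCast_atTop_atTop)
  exact not_tendsto_atTop_of_tendsto_nhds h1 h2


noncomputable def mkC0 (x : ℕ → ℝ) (hx : Tendsto x atTop (nhds 0)) : ZeroAtInftyContinuousMap ℕ ℝ :=
  ⟨⟨x, continuous_of_discreteTopology⟩, by rwa [Filter.cocompact_eq_cofinite, Nat.cofinite_eq_atTop]⟩

@[simp] lemma mkC0_apply (x : ℕ → ℝ) (hx) (k : ℕ) : mkC0 x hx k = x k := rfl

lemma C0_apply_le_norm (f : ZeroAtInftyContinuousMap ℕ ℝ) (k : ℕ) : |f k| ≤ ‖f‖ := by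
  have := BoundedContinuousFunction.norm_coe_le_norm f.toBCF k
  simpa using this

lemma C0_norm_le (f : ZeroAtInftyContinuousMap ℕ ℝ) {C : ℝ} (hC : 0 ≤ C)
    (h : ∀ k, |f k| ≤ C) : ‖f‖ ≤ C := by
  rw [← ZeroAtInftyContinuousMap.norm_toBCF_eq_norm]
  exact BoundedContinuousFunction.norm_le hC |>.mpr (by simpa using h)

lemma row_summable_mul (c : ℕ → ℝ) (hc : Summable fun k => |c k|)
    (x : ZeroAtInftyContinuousMap ℕ ℝ) : Summable (fun k => c k * x k) := by
  refine Summable.of_abs (Summable.of_nonneg_of_le (fun k => abs_nonneg _) (fun k => ?_)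
    (hc.mul_right ‖x‖))
  rw [abs_mul]
  exact mul_le_mul_of_nonneg_left (C0_apply_le_norm x k) (abs_nonneg _)

lemma row_tsum_bound (c : ℕ → ℝ) (hc : Summable fun k => |c k|)
    (x : ZeroAtInftyContinuousMap ℕ ℝ) :
    |∑' k, c k * x k| ≤ (∑' k, |c k|) * ‖x‖ := by
  have hsab : Summable (fun k => |c k| * |x k|) := by
    simpa [abs_mul] using (row_summable_mul c hc x).abs
  calc |∑' k, c k * x k| ≤ ∑' k, |c k| * |x k| := by
        simpa [abs_mul] using norm_tsum_le_tsum_norm (f := fun k => c k * x k)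
          (by simpa [abs_mul] using hsab)
    _ ≤ ∑' k, |c k| * ‖x‖ := by
        refine Summable.tsum_le_tsum (fun k => ?_) hsab (hc.mul_right ‖x‖)
        exact mul_le_mul_of_nonneg_left (C0_apply_le_norm x k) (abs_nonneg _)
    _ = (∑' k, |c k|) * ‖x‖ := tsum_mul_right

noncomputable def rowCLM (c : ℕ → ℝ) (hc : Summable fun k => |c k|) :
    ZeroAtInftyContinuousMap ℕ ℝ →L[ℝ] ℝ :=
  LinearMap.mkContinuous
    { toFun := fun x => ∑' k, c k * x k
      map_add' := fun x y => by
        simp only [ZeroAtInftyContinuousMap.coe_add, Pi.add_apply, mul_add]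
        exact Summable.tsum_add (row_summable_mul c hc x) (row_summable_mul c hc y)
      map_smul' := fun r x => by
        simp only [ZeroAtInftyContinuousMap.coe_smul, Pi.smul_apply, smul_eq_mul,
          RingHom.id_apply]
        rw [← tsum_mul_left]
        congr 1; ext k; ring }
    (∑' k, |c k|) (fun x => by
      simpa using row_tsum_bound c hc x)

@[simp] lemma rowCLM_apply (c : ℕ → ℝ) (hc) (x : ZeroAtInftyContinuousMap ℕ ℝ) :
    rowCLM c hc x = ∑' k, c k * x k := rfl

/-- truncated sign vector -/
noncomputable def sgnVec (c : ℕ → ℝ) (K : ℕ) : ZeroAtInftyContinuousMap ℕ ℝ :=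
  mkC0 (fun k => if k < K then (if 0 ≤ c k then 1 else -1) else 0)
    (by
      refine tendsto_nhds_of_eventually_eq ?_
      filter_upwards [eventually_ge_atTop K] with k hk
      simp [not_lt.mpr hk])

lemma sgnVec_norm_le (c : ℕ → ℝ) (K : ℕ) : ‖sgnVec c K‖ ≤ 1 := by
  refine C0_norm_le _ zero_le_one fun k => ?_
  show |if k < K then (if 0 ≤ c k then (1:ℝ) else -1) else 0| ≤ 1
  by_cases h : k < K
  · by_cases h2 : 0 ≤ c k <;> simp [h, h2]
  · simp [h]

lemma rowCLM_sgnVec (c : ℕ → ℝ) (hc : Summable fun k => |c k|) (K : ℕ) :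
    rowCLM c hc (sgnVec c K) = ∑ k ∈ range K, |c k| := by
  rw [rowCLM_apply]
  rw [tsum_eq_sum (s := range K) (f := fun k => c k * (sgnVec c K) k)
    (fun k hk => by
      simp only [mem_range] at hk
      show c k * (if k < K then _ else (0:ℝ)) = 0
      simp [hk])]
  refine Finset.sum_congr rfl fun k hk => ?_
  simp only [mem_range] at hk
  show c k * (if k < K then (if 0 ≤ c k then (1:ℝ) else -1) else 0) = |c k|
  rw [if_pos hk]
  by_cases h : 0 ≤ c k
  · simp [h, abs_of_nonneg h]
  · push_neg at h
    simp [not_le.mpr h, abs_of_neg h]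

lemma tsum_abs_le_of_bound (c : ℕ → ℝ) (hc : Summable fun k => |c k|) {C : ℝ}
    (h : ∀ K, ∑ k ∈ range K, |c k| ≤ C) : ∑' k, |c k| ≤ C :=
  le_of_tendsto' hc.hasSum.tendsto_sum_nat h

lemma abs_tsum_le' (f : ℕ → ℝ) (h : Summable fun k => |f k|) : |∑' k, f k| ≤ ∑' k, |f k| := by
  simpa using norm_tsum_le_tsum_norm (f := f) (by simpa using h)

lemma summable_mul_of_bounded (c x : ℕ → ℝ) (hc : Summable fun k => |c k|) {B : ℝ}
    (hB : ∀ k, |x k| ≤ B) : Summable fun k => c k * x k := by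
  refine Summable.of_abs (Summable.of_nonneg_of_le (fun k => abs_nonneg _) (fun k => ?_)
    (hc.mul_right B))
  rw [abs_mul]
  exact mul_le_mul_of_nonneg_left (hB k) (abs_nonneg _)

lemma abs_tsum_mul_le (c x : ℕ → ℝ) (hc : Summable fun k => |c k|) {B : ℝ}
    (hB : ∀ k, |x k| ≤ B) : |∑' k, c k * x k| ≤ (∑' k, |c k|) * B := by
  have h1 : Summable fun k => |c k * x k| := (summable_mul_of_bounded c x hc hB).abs
  calc |∑' k, c k * x k| ≤ ∑' k, |c k * x k| := abs_tsum_le' _ h1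
    _ ≤ ∑' k, |c k| * B := by
        refine Summable.tsum_le_tsum (fun k => ?_) h1 (hc.mul_right B)
        rw [abs_mul]
        exact mul_le_mul_of_nonneg_left (hB k) (abs_nonneg _)
    _ = (∑' k, |c k|) * B := tsum_mul_right

lemma aux_frac1 (t D ε : ℝ) (ht : 0 ≤ t) (hD : 0 ≤ D) (hε : 0 ≤ ε) :
    t * (ε / (4 * (t + 1) * (D + 1))) * D ≤ ε / 4 := by
  have h1 : t * (ε / (4 * (t + 1) * (D + 1))) * D = (t * D * ε) / (4 * (t + 1) * (D + 1)) := by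
    ring
  rw [h1, div_le_div_iff₀ (by positivity) (by norm_num : (0:ℝ) < 4)]
  nlinarith [mul_nonneg (mul_nonneg hε ht) hD, mul_nonneg hε hD, mul_nonneg hε ht]

lemma aux_frac2 (C ε : ℝ) (hC : 0 ≤ C) (hε : 0 ≤ ε) (c : ℝ) (hc : 0 < c) :
    C * (ε / (c * (C + 1))) ≤ ε / c := by
  have h1 : C * (ε / (c * (C + 1))) = (C * ε) / (c * (C + 1)) := by ring
  rw [h1, div_le_div_iff₀ (by positivity) hc]
  nlinarith [mul_nonneg hε hC]

theorem reverse_dir {ι : Type*} [Nonempty ι] (a : ι → ℕ → ℕ → ℝ)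
    (hM1 : ∀ ν, ∃ C, ∀ n, Summable (fun k => |a ν n k|) ∧ ∑' k, |a ν n k| ≤ C)
    (hM2 : ∃ N, ∃ C, ∀ ν, ∀ n ≥ N, ∑' k, |a ν n k| ≤ C)
    (hM3 : ∀ ε > 0, ∃ N, ∀ n ≥ N, ∀ ν, |(∑' k, a ν n k) - 1| ≤ ε)
    (hM4 : ∀ k, ∀ ε > 0, ∃ N, ∀ n ≥ N, ∀ ν, |a ν n k| ≤ ε) :
    ∀ x : ℕ → ℝ, ∀ l : ℝ, Tendsto x atTop (nhds l) →
        (∀ ν n, ∃ s, SeriesConv (fun k => a ν n k * x k) s) ∧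
        (∀ S : ι → ℕ → ℝ, (∀ ν n, SeriesConv (fun k => a ν n k * x k) (S ν n)) →
          (∀ ε > 0, ∃ N, ∀ n ≥ N, ∀ ν, |S ν n - l| ≤ ε) ∧
          (∀ ν, ∃ M, ∀ n, |S ν n| ≤ M)) := by
  have summ : ∀ ν n, Summable fun k => |a ν n k| := fun ν n => ((hM1 ν).choose_spec n).1
  intro x l hx
  -- x is bounded
  obtain ⟨B, hB⟩ : ∃ B, ∀ k, |x k| ≤ B := by
    obtain ⟨B, hB⟩ := (hx.abs.bddAbove_range)
    exact ⟨B, fun k => hB (Set.mem_range_self k)⟩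
  have hlB : |l| ≤ B := le_of_tendsto' hx.abs (fun k => hB k)
  have hB0 : 0 ≤ B := le_trans (abs_nonneg _) (hB 0)
  have sxa : ∀ ν n, Summable fun k => a ν n k * x k :=
    fun ν n => summable_mul_of_bounded _ _ (summ ν n) hB
  refine ⟨fun ν n => ⟨∑' k, a ν n k * x k, (sxa ν n).hasSum.tendsto_sum_nat⟩, ?_⟩
  intro S hS
  have hSeq : ∀ ν n, S ν n = ∑' k, a ν n k * x k :=
    fun ν n => tendsto_nhds_unique (hS ν n) (sxa ν n).hasSum.tendsto_sum_nat
  constructor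
  · -- uniform convergence
    intro ε hε
    obtain ⟨N₀, C, hC⟩ := hM2
    have hC0 : 0 ≤ C := by
      obtain ⟨ν⟩ := ‹Nonempty ι›
      exact le_trans (tsum_nonneg fun k => abs_nonneg _) (hC ν N₀ le_rfl)
    set D : ℝ := B + |l| with hD
    have hD0 : 0 ≤ D := by positivity
    have hxlD : ∀ k, |x k - l| ≤ D := fun k =>
      le_trans (abs_sub _ _) (add_le_add (hB k) le_rfl)
    set δ : ℝ := ε / (4 * (C + 1)) with hδ
    have hδ0 : 0 < δ := by positivity
    obtain ⟨K, hK⟩ := (Metric.tendsto_atTop.mp hx (δ) hδ0)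
    have hK' : ∀ k, K ≤ k → |x k - l| ≤ δ := fun k hk =>
      le_of_lt (by simpa [Real.dist_eq] using hK k hk)
    set ε' : ℝ := ε / (4 * (K + 1) * (D + 1)) with hε'
    have hε'0 : 0 < ε' := by positivity
    choose Nk hNk using fun k => hM4 k ε' hε'0
    set N₁ : ℕ := (Finset.range K).sup Nk with hN₁
    obtain ⟨N₂, hN₂⟩ := hM3 (ε / (2 * (|l| + 1))) (by positivity)
    refine ⟨max (max N₀ N₁) N₂, fun n hn ν => ?_⟩
    have hn₀ : N₀ ≤ n := le_trans (le_trans (le_max_left _ _) (le_max_left _ _)) hn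
    have hn₁ : N₁ ≤ n := le_trans (le_trans (le_max_right _ _) (le_max_left _ _)) hn
    have hn₂ : N₂ ≤ n := le_trans (le_max_right _ _) hn
    -- decomposition
    have hsa : Summable (fun k => a ν n k) := (summ ν n).of_abs
    have hsxl : Summable (fun k => a ν n k * (x k - l)) :=
      summable_mul_of_bounded _ _ (summ ν n) hxlD
    have hdecomp : S ν n - l = (∑' k, a ν n k * (x k - l)) + l * ((∑' k, a ν n k) - 1) := by
      rw [hSeq]
      have h1 : ∑' k, a ν n k * (x k - l) = (∑' k, a ν n k * x k) - (∑' k, a ν n k * l) := by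
        rw [← Summable.tsum_sub (sxa ν n) (hsa.mul_right l)]
        congr 1; ext k; ring
      have h2 : ∑' k, a ν n k * l = (∑' k, a ν n k) * l := tsum_mul_right
      rw [h1, h2]; ring
    -- tail/head split of the first term
    have hsplit : (∑ k ∈ range K, a ν n k * (x k - l)) + ∑' k, a ν n (k + K) * (x (k + K) - l)
        = ∑' k, a ν n k * (x k - l) := Summable.sum_add_tsum_nat_add K hsxl
    have htail_abs : Summable (fun k => |a ν n (k + K)|) :=
      (summable_nat_add_iff K).mpr (summ ν n)
    have htail_tot : ∑' k, |a ν n (k + K)| ≤ ∑' k, |a ν n k| := by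
      have h := Summable.sum_add_tsum_nat_add (f := fun k => |a ν n k|) K (summ ν n)
      have hhead : (0:ℝ) ≤ ∑ k ∈ range K, |a ν n k| :=
        Finset.sum_nonneg fun _ _ => abs_nonneg _
      linarith
    have htail_bd : |∑' k, a ν n (k + K) * (x (k + K) - l)| ≤ C * δ := by
      calc |∑' k, a ν n (k + K) * (x (k + K) - l)|
          ≤ (∑' k, |a ν n (k + K)|) * δ :=
            abs_tsum_mul_le _ _ htail_abs (fun k => hK' _ (Nat.le_add_left K k))
        _ ≤ C * δ := mul_le_mul_of_nonneg_right (le_trans htail_tot (hC ν n hn₀)) hδ0.le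
    have hhead_bd : |∑ k ∈ range K, a ν n k * (x k - l)| ≤ (K : ℝ) * ε' * D := by
      calc |∑ k ∈ range K, a ν n k * (x k - l)|
          ≤ ∑ k ∈ range K, |a ν n k * (x k - l)| := Finset.abs_sum_le_sum_abs _ _
        _ ≤ ∑ _k ∈ range K, ε' * D := by
            refine Finset.sum_le_sum fun k hk => ?_
            rw [abs_mul]
            refine mul_le_mul ?_ (hxlD k) (abs_nonneg _) hε'0.le
            exact hNk k n (le_trans (Finset.le_sup (f := Nk) hk) hn₁) ν
        _ = (K : ℝ) * ε' * D := by rw [Finset.sum_const, Finset.card_range]; simp [mul_assoc]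
    have hl_bd : |l * ((∑' k, a ν n k) - 1)| ≤ |l| * (ε / (2 * (|l| + 1))) := by
      rw [abs_mul]
      exact mul_le_mul_of_nonneg_left (hN₂ n hn₂ ν) (abs_nonneg l)
    have h14 : (K : ℝ) * ε' * D ≤ ε / 4 := by
      rw [hε']
      exact aux_frac1 (K : ℝ) D ε (Nat.cast_nonneg K) hD0 hε.le
    have hC4 : C * δ ≤ ε / 4 := by
      rw [hδ]
      exact aux_frac2 C ε hC0 hε.le 4 (by norm_num)
    have hl2 : |l| * (ε / (2 * (|l| + 1))) ≤ ε / 2 :=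
      aux_frac2 |l| ε (abs_nonneg l) hε.le 2 (by norm_num)
    rw [hdecomp, ← hsplit]
    calc |((∑ k ∈ range K, a ν n k * (x k - l)) + ∑' k, a ν n (k + K) * (x (k + K) - l))
          + l * ((∑' k, a ν n k) - 1)|
        ≤ |(∑ k ∈ range K, a ν n k * (x k - l)) + ∑' k, a ν n (k + K) * (x (k + K) - l)|
          + |l * ((∑' k, a ν n k) - 1)| := abs_add_le _ _
      _ ≤ (|∑ k ∈ range K, a ν n k * (x k - l)| + |∑' k, a ν n (k + K) * (x (k + K) - l)|)
          + |l * ((∑' k, a ν n k) - 1)| := by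
            exact add_le_add (abs_add_le _ _) le_rfl
      _ ≤ ((K : ℝ) * ε' * D + C * δ) + |l| * (ε / (2 * (|l| + 1))) :=
            add_le_add (add_le_add hhead_bd htail_bd) hl_bd
      _ ≤ (ε / 4 + ε / 4) + ε / 2 := add_le_add (add_le_add h14 hC4) hl2
      _ = ε := by ring
  · -- boundedness in n for fixed ν
    intro ν
    obtain ⟨C, hC⟩ := hM1 ν
    refine ⟨C * B, fun n => ?_⟩
    rw [hSeq]
    calc |∑' k, a ν n k * x k| ≤ (∑' k, |a ν n k|) * B := abs_tsum_mul_le _ _ (summ ν n) hB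
      _ ≤ C * B := mul_le_mul_of_nonneg_right ((hC n).2) hB0

theorem forward_dir {ι : Type*} [Nonempty ι] (a : ι → ℕ → ℕ → ℝ)
    (H : ∀ x : ℕ → ℝ, ∀ l : ℝ, Tendsto x atTop (nhds l) →
        (∀ ν n, ∃ s, SeriesConv (fun k => a ν n k * x k) s) ∧
        (∀ S : ι → ℕ → ℝ, (∀ ν n, SeriesConv (fun k => a ν n k * x k) (S ν n)) →
          (∀ ε > 0, ∃ N, ∀ n ≥ N, ∀ ν, |S ν n - l| ≤ ε) ∧
          (∀ ν, ∃ M, ∀ n, |S ν n| ≤ M))) :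
    ((∀ ν, ∃ C, ∀ n, Summable (fun k => |a ν n k|) ∧ ∑' k, |a ν n k| ≤ C) ∧
        (∃ N, ∃ C, ∀ ν, ∀ n ≥ N, ∑' k, |a ν n k| ≤ C) ∧
        (∀ ε > 0, ∃ N, ∀ n ≥ N, ∀ ν, |(∑' k, a ν n k) - 1| ≤ ε) ∧
        (∀ k, ∀ ε > 0, ∃ N, ∀ n ≥ N, ∀ ν, |a ν n k| ≤ ε)) := by
  -- row absolute summability
  have summ : ∀ ν n, Summable fun k => |a ν n k| := by
    intro ν n
    exact abs_summable_of_seriesConv (a ν n) (fun x hx => (H x 0 hx).1 ν n)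
  set f : ι → ℕ → (ZeroAtInftyContinuousMap ℕ ℝ →L[ℝ] ℝ) :=
    fun ν n => rowCLM (a ν n) (summ ν n) with hf
  have hx0 : ∀ x : ZeroAtInftyContinuousMap ℕ ℝ, Tendsto (⇑x) atTop (nhds 0) := by
    intro x
    have := x.zero_at_infty'
    rwa [Filter.cocompact_eq_cofinite, Nat.cofinite_eq_atTop] at this
  have hFx : ∀ (x : ZeroAtInftyContinuousMap ℕ ℝ) ν n,
      SeriesConv (fun k => a ν n k * x k) (f ν n x) :=
    fun x ν n => (row_summable_mul (a ν n) (summ ν n) x).hasSum.tendsto_sum_nat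
  -- norm lower bound:  ∑' |a ν n k| ≤ ‖f ν n‖
  have hnorm_ge : ∀ ν n, ∑' k, |a ν n k| ≤ ‖f ν n‖ := by
    intro ν n
    refine tsum_abs_le_of_bound _ (summ ν n) fun K => ?_
    have h1 : ∑ k ∈ range K, |a ν n k| = f ν n (sgnVec (a ν n) K) :=
      (rowCLM_sgnVec (a ν n) (summ ν n) K).symm
    rw [h1]
    calc f ν n (sgnVec (a ν n) K) ≤ |f ν n (sgnVec (a ν n) K)| := le_abs_self _
      _ ≤ ‖f ν n‖ * ‖sgnVec (a ν n) K‖ := (f ν n).le_opNorm _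
      _ ≤ ‖f ν n‖ := mul_le_of_le_one_right (norm_nonneg (f ν n)) (sgnVec_norm_le _ _)
  -- (M4)
  have hM4 : ∀ k, ∀ ε > 0, ∃ N, ∀ n ≥ N, ∀ ν, |a ν n k| ≤ ε := by
    intro k ε hε
    set e : ℕ → ℝ := fun j => if j = k then 1 else 0 with he
    have he0 : Tendsto e atTop (nhds 0) := by
      refine tendsto_nhds_of_eventually_eq ?_
      filter_upwards [eventually_ge_atTop (k + 1)] with j hj
      have : j ≠ k := by omega
      simp [he, this]
    have hconv : ∀ ν n, SeriesConv (fun j => a ν n j * e j) (a ν n k) := by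
      intro ν n
      refine Tendsto.congr' ?_ tendsto_const_nhds
      filter_upwards [eventually_ge_atTop (k + 1)] with m hm
      rw [eq_comm, Finset.sum_eq_single_of_mem k (Finset.mem_range.mpr (by omega))]
      · simp [he]
      · intro j _ hj
        simp [he, hj]
    obtain ⟨N, hN⟩ := ((H e 0 he0).2 (fun ν n => a ν n k) hconv).1 ε hε
    exact ⟨N, fun n hn ν => by simpa using hN n hn ν⟩
  -- (M1)
  have hM1 : ∀ ν, ∃ C, ∀ n, Summable (fun k => |a ν n k|) ∧ ∑' k, |a ν n k| ≤ C := by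
    intro ν
    have hpt : ∀ x : ZeroAtInftyContinuousMap ℕ ℝ, ∃ C, ∀ n, ‖f ν n x‖ ≤ C := by
      intro x
      obtain ⟨M, hM⟩ := ((H (⇑x) 0 (hx0 x)).2 (fun ν' n => f ν' n x)
        (fun ν' n => hFx x ν' n)).2 ν
      exact ⟨M, fun n => by simpa using hM n⟩
    obtain ⟨C, hC⟩ := banach_steinhaus hpt
    exact ⟨C, fun n => ⟨summ ν n, le_trans (hnorm_ge ν n) (hC n)⟩⟩
  -- (M3)
  have hM3 : ∀ ε > 0, ∃ N, ∀ n ≥ N, ∀ ν, |(∑' k, a ν n k) - 1| ≤ ε := by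
    intro ε hε
    have hconv : ∀ ν n, SeriesConv (fun k => a ν n k * (1:ℝ)) (∑' k, a ν n k) := by
      intro ν n
      have := (summ ν n).of_abs.hasSum.tendsto_sum_nat
      refine Tendsto.congr (fun m => ?_) this
      exact Finset.sum_congr rfl fun k _ => (mul_one _).symm
    obtain ⟨N, hN⟩ := ((H (fun _ => 1) 1 tendsto_const_nhds).2
      (fun ν n => ∑' k, a ν n k) hconv).1 ε hε
    exact ⟨N, hN⟩
  -- (M2) via Baire
  have hM2 : ∃ N, ∃ C, ∀ ν, ∀ n ≥ N, ∑' k, |a ν n k| ≤ C := by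
    set E : ℕ → Set (ZeroAtInftyContinuousMap ℕ ℝ) :=
      fun m => {x | ∀ ν, ∀ n, m ≤ n → ‖f ν n x‖ ≤ m} with hE
    have hclosed : ∀ m, IsClosed (E m) := by
      intro m
      have : E m = ⋂ ν, ⋂ n, ⋂ (_ : m ≤ n),
          {x : ZeroAtInftyContinuousMap ℕ ℝ | ‖f ν n x‖ ≤ m} := by
        ext x; simp [hE, Set.mem_iInter]
      rw [this]
      exact isClosed_iInter fun ν => isClosed_iInter fun n => isClosed_iInter fun _ =>
        isClosed_le ((f ν n).continuous.norm) continuous_const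
    have hcover : (⋃ m, E m) = Set.univ := by
      rw [Set.iUnion_eq_univ_iff]
      intro x
      obtain ⟨N, hN⟩ := ((H (⇑x) 0 (hx0 x)).2 (fun ν n => f ν n x)
        (fun ν n => hFx x ν n)).1 1 one_pos
      refine ⟨max N 1, fun ν n hn => ?_⟩
      have h1 : |f ν n x| ≤ 1 := by simpa using hN n (le_trans (le_max_left _ _) hn) ν
      have h2 : (1 : ℝ) ≤ (max N 1 : ℕ) := by
        exact_mod_cast Nat.one_le_iff_ne_zero.mpr (by positivity)
      calc ‖f ν n x‖ = |f ν n x| := rfl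
        _ ≤ 1 := h1
        _ ≤ (max N 1 : ℕ) := h2
    obtain ⟨m, hm⟩ := nonempty_interior_of_iUnion_of_closed hclosed hcover
    obtain ⟨x₀, hx₀⟩ := hm
    obtain ⟨r, hr, hball⟩ := Metric.mem_nhds_iff.mp (mem_interior_iff_mem_nhds.mp hx₀)
    have hx₀E : x₀ ∈ E m := hball (Metric.mem_ball_self hr)
    refine ⟨m, 4 * m / r, fun ν n hn => ?_⟩
    refine tsum_abs_le_of_bound _ (summ ν n) fun K => ?_
    set y : ZeroAtInftyContinuousMap ℕ ℝ := x₀ + (r / 2) • sgnVec (a ν n) K with hy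
    have hyball : y ∈ Metric.ball x₀ r := by
      rw [Metric.mem_ball, dist_eq_norm, hy, add_sub_cancel_left]
      have hb : ‖(r / 2) • sgnVec (a ν n) K‖ ≤ r / 2 := by
        refine C0_norm_le _ (by positivity) fun k => ?_
        have : ((r / 2) • sgnVec (a ν n) K) k = (r / 2) * (sgnVec (a ν n) K) k := rfl
        rw [this, abs_mul, abs_of_pos (by positivity : (0:ℝ) < r / 2)]
        have h1 : |(sgnVec (a ν n) K) k| ≤ 1 :=
          le_trans (C0_apply_le_norm _ k) (sgnVec_norm_le _ _)
        nlinarith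
      linarith
    have hyE : y ∈ E m := hball hyball
    have h1 : ‖f ν n y‖ ≤ m := hyE ν n hn
    have h2 : ‖f ν n x₀‖ ≤ m := hx₀E ν n hn
    have h3 : f ν n y = f ν n x₀ + (r / 2) * (∑ k ∈ range K, |a ν n k|) := by
      rw [hy, map_add, map_smul, smul_eq_mul, rowCLM_sgnVec]
    have h4 : (r / 2) * (∑ k ∈ range K, |a ν n k|) ≤ 2 * m := by
      have := abs_sub_abs_le_abs_sub (f ν n y) (f ν n x₀)
      have h5 : |f ν n y - f ν n x₀| = (r / 2) * (∑ k ∈ range K, |a ν n k|) := by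
        rw [h3, add_sub_cancel_left]
        rw [abs_of_nonneg (by positivity)]
      have h6 : |f ν n y - f ν n x₀| ≤ |f ν n y| + |f ν n x₀| := abs_sub _ _
      have h7 : |f ν n y| ≤ m := h1
      have h8 : |f ν n x₀| ≤ m := h2
      linarith [h5 ▸ h6]
    rw [le_div_iff₀ hr]
    have h9 : (∑ k ∈ range K, |a ν n k|) * r = 2 * ((r / 2) * ∑ k ∈ range K, |a ν n k|) := by
      ring
    rw [h9]
    linarith
  exact ⟨hM1, hM2, hM3, hM4⟩

end Helpers

/-- Uniform Silverman–Toeplitz theorem (Bell). -/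
theorem stmt8 {ι : Type*} [Nonempty ι] (a : ι → ℕ → ℕ → ℝ) :
    (∀ x : ℕ → ℝ, ∀ l : ℝ, Tendsto x atTop (nhds l) →
        (∀ ν n, ∃ s, SeriesConv (fun k => a ν n k * x k) s) ∧
        (∀ S : ι → ℕ → ℝ, (∀ ν n, SeriesConv (fun k => a ν n k * x k) (S ν n)) →
          (∀ ε > 0, ∃ N, ∀ n ≥ N, ∀ ν, |S ν n - l| ≤ ε) ∧
          (∀ ν, ∃ M, ∀ n, |S ν n| ≤ M))) ↔
      ((∀ ν, ∃ C, ∀ n, Summable (fun k => |a ν n k|) ∧ ∑' k, |a ν n k| ≤ C) ∧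
        (∃ N, ∃ C, ∀ ν, ∀ n ≥ N, ∑' k, |a ν n k| ≤ C) ∧
        (∀ ε > 0, ∃ N, ∀ n ≥ N, ∀ ν, |(∑' k, a ν n k) - 1| ≤ ε) ∧
        (∀ k, ∀ ε > 0, ∃ N, ∀ n ≥ N, ∀ ν, |a ν n k| ≤ ε)) := by
  constructor
  · intro H
    exact forward_dir a H
  · rintro ⟨h1, h2, h3, h4⟩
    exact reverse_dir a h1 h2 h3 h4
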